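/- Assume a_X > b_X > 0, a_Y + b_Y > 0, b_Y > a_Y, and 0 < T_y < T_I, where T_I = (b_Y − a_Y)/(2·ln(a_X/b_X)). Then T_X'(x) > 0 for every x ∈ (0, 1/2). -/

import Mathlib

open Real Filter Set Topology

/-- QRE response of the second player. -/
noncomputable def qreY (aY bY Ty : ℝ) (x : ℝ) : ℝ :=
  (1 + Real.exp ((bY - (aY + bY) * x) / Ty))⁻¹

/-- QRE temperature curve for the first player. -/
noncomputable def qreTX (aX bX aY bY Ty : ℝ) (x : ℝ) : ℝ :=
  (bX - (aX + bX) * qreY aY bY Ty x) / Real.log (1 / x - 1)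

/-- The auxiliary function L(x) = y(x) + x(1-x) ln(1/x-1) y'(x). -/
noncomputable def qreL (aY bY Ty : ℝ) (x : ℝ) : ℝ :=
  qreY aY bY Ty x + x * (1 - x) * Real.log (1 / x - 1) * deriv (qreY aY bY Ty) x

/-- classical inequality log r < (r - r⁻¹)/2 for r > 1 -/
lemma aux_log_lt {r : ℝ} (hr : 1 < r) : Real.log r < (r - r⁻¹) / 2 := by
  have h0 : 0 < Real.log r := Real.log_pos hr
  have h := Real.self_lt_sinh_iff.2 h0
  rwa [Real.sinh_eq, Real.exp_log (by linarith), Real.exp_neg,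
    Real.exp_log (by linarith)] at h

/-- monotone part: G(E) < G(E₀) for E > E₀ ≥ 1 -/
lemma aux_G {m E₀ E : ℝ} (hE₀ : 1 ≤ E₀) (hm : Real.log E₀ = m) (hE : E₀ < E) :
    (1 + E)⁻¹ + E / (1 + E) ^ 2 * (Real.log E - m) < (1 + E₀)⁻¹ := by
  set G : ℝ → ℝ := fun e => (1 + e)⁻¹ + e / (1 + e) ^ 2 * (Real.log e - m) with hG
  have hder : ∀ e : ℝ, 0 < e →
      HasDerivAt G ((Real.log e - m) * (1 - e) / (1 + e) ^ 3) e := by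
    intro e he
    have h1e : (0:ℝ) < 1 + e := by linarith
    have h1 : HasDerivAt (fun z : ℝ => (1 + z)⁻¹) (-1 / (1 + e) ^ 2) e :=
      ((hasDerivAt_id e).const_add 1).inv h1e.ne'
    have h2 : HasDerivAt (fun z : ℝ => z / (1 + z) ^ 2)
        ((1 * (1 + e) ^ 2 - e * (2 * (1 + e) ^ 1 * 1)) / ((1 + e) ^ 2) ^ 2) e :=
      (hasDerivAt_id e).div (((hasDerivAt_id e).const_add 1).pow 2)
        (by positivity)
    have h3 : HasDerivAt (fun z : ℝ => Real.log z - m) e⁻¹ e :=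
      (Real.hasDerivAt_log he.ne').sub_const m
    have h4 := h1.add (h2.mul h3)
    refine h4.congr_deriv ?_
    field_simp
    ring
  have hcont : ContinuousOn G (Set.Ici E₀) := fun e he =>
    (hder e (by simp only [Set.mem_Ici] at he; linarith)).continuousAt.continuousWithinAt
  have hanti : StrictAntiOn G (Set.Ici E₀) := by
    apply strictAntiOn_of_deriv_neg (convex_Ici E₀) hcont
    intro e he
    rw [interior_Ici, Set.mem_Ioi] at he
    have he0 : (0:ℝ) < e := by linarith
    rw [(hder e he0).deriv]
    have hlog : 0 < Real.log e - m := by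
      rw [← hm]; have := Real.log_lt_log (by linarith : (0:ℝ) < E₀) he; linarith
    have : (Real.log e - m) * (1 - e) < 0 :=
      mul_neg_of_pos_of_neg hlog (by linarith)
    exact div_neg_of_neg_of_pos this (by positivity)
  have := hanti (Set.self_mem_Ici) (Set.mem_Ici.2 hE.le) hE
  simp only [hG] at this ⊢
  rwa [hm, sub_self, mul_zero, add_zero] at this

lemma qreY_hasDerivAt (aY bY Ty : ℝ) (hTy : Ty ≠ 0) (x : ℝ) :
    HasDerivAt (qreY aY bY Ty)
      ((aY + bY) / Ty *
        (Real.exp ((bY - (aY + bY) * x) / Ty) /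
          (1 + Real.exp ((bY - (aY + bY) * x) / Ty)) ^ 2)) x := by
  have h1 : HasDerivAt (fun z : ℝ => (bY - (aY + bY) * z) / Ty) (-(aY + bY) / Ty) x := by
    have : HasDerivAt (fun z : ℝ => bY - (aY + bY) * z) (-(aY + bY)) x := by
      simpa using ((hasDerivAt_id x).const_mul (aY + bY)).const_sub bY
    exact this.div_const Ty
  have h2 := h1.exp
  have h3 := (h2.const_add 1)
  have hne : (1 : ℝ) + Real.exp ((bY - (aY + bY) * x) / Ty) ≠ 0 := by positivity
  have h4 := h3.inv hne
  show HasDerivAt (fun x => (1 + Real.exp ((bY - (aY + bY) * x) / Ty))⁻¹) _ x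
  refine h4.congr_deriv ?_
  field_simp

theorem stmt_8 (aX bX aY bY Ty : ℝ) (hTy : 0 < Ty)
    (hab : aX > bX) (hbX : bX > 0) (hY : aY + bY > 0) (hba : bY > aY)
    (hTI : Ty < (bY - aY) / (2 * Real.log (aX / bX))) :
    ∀ x ∈ Set.Ioo (0:ℝ) (1/2), 0 < deriv (qreTX aX bX aY bY Ty) x := by
  intro x hx
  obtain ⟨hx0, hx2⟩ := hx
  have hx1 : x < 1 := by linarith
  have h1x : (0:ℝ) < 1 - x := by linarith
  have hr : (1:ℝ) < 1 / x - 1 := by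
    rw [lt_sub_iff_add_lt, lt_div_iff₀ hx0]; linarith
  have hrne : (1:ℝ) / x - 1 ≠ 0 := by linarith
  have hV : 0 < Real.log (1 / x - 1) := Real.log_pos hr
  -- derivatives
  have hnum : HasDerivAt (fun z : ℝ => bX - (aX + bX) * qreY aY bY Ty z)
      (-((aX + bX) * ((aY + bY) / Ty *
        (Real.exp ((bY - (aY + bY) * x) / Ty) /
          (1 + Real.exp ((bY - (aY + bY) * x) / Ty)) ^ 2)))) x :=
    ((qreY_hasDerivAt aY bY Ty hTy.ne' x).const_mul (aX + bX)).const_sub bX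
  have hinv : HasDerivAt (fun z : ℝ => 1 / z - 1) (-(x ^ 2)⁻¹) x := by
    simpa only [one_div] using (hasDerivAt_inv hx0.ne').sub_const 1
  have hden : HasDerivAt (fun z : ℝ => Real.log (1 / z - 1))
      (-(x ^ 2)⁻¹ / (1 / x - 1)) x := hinv.log hrne
  have hdiv := hnum.div hden hV.ne'
  have hd : deriv (qreTX aX bX aY bY Ty) x =
      (-((aX + bX) * ((aY + bY) / Ty *
          (Real.exp ((bY - (aY + bY) * x) / Ty) /
            (1 + Real.exp ((bY - (aY + bY) * x) / Ty)) ^ 2))) * Real.log (1 / x - 1) -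
        (bX - (aX + bX) * qreY aY bY Ty x) * (-(x ^ 2)⁻¹ / (1 / x - 1))) /
        Real.log (1 / x - 1) ^ 2 :=
    HasDerivAt.deriv (show HasDerivAt (qreTX aX bX aY bY Ty) _ x from hdiv)
  rw [hd]
  apply div_pos _ (pow_pos hV 2)
  simp only [qreY]
  set E := Real.exp ((bY - (aY + bY) * x) / Ty) with hEdef
  set V := Real.log (1 / x - 1) with hVdef
  have hE0 : 0 < E := Real.exp_pos _
  have hP : (0:ℝ) < 1 + E := by linarith
  -- structural facts
  have hS : (0:ℝ) < aX + bX := by linarith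
  have hE1 : (1:ℝ) < aX / bX := (one_lt_div hbX).2 hab
  have hm0 : 0 < Real.log (aX / bX) := Real.log_pos hE1
  have hmineq : Real.log (aX / bX) < (bY - aY) / (2 * Ty) := by
    rw [lt_div_iff₀ (by positivity)] at hTI ⊢
    nlinarith
  have hueq : (bY - (aY + bY) * x) / Ty - (aY + bY) / Ty * (1 / 2 - x)
      = (bY - aY) / (2 * Ty) := by field_simp; ring
  have hβt : 0 < (aY + bY) / Ty * (1 / 2 - x) := by
    apply mul_pos (by positivity); linarith
  have h2 : (aY + bY) / Ty * (1 / 2 - x)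
      < (bY - (aY + bY) * x) / Ty - Real.log (aX / bX) := by linarith
  have hum : Real.log (aX / bX) < (bY - (aY + bY) * x) / Ty := by linarith
  have hEE : aX / bX < E := by
    rw [hEdef, show aX / bX = Real.exp (Real.log (aX / bX)) from
      (Real.exp_log (by positivity)).symm]
    exact Real.exp_lt_exp.2 hum
  have haux := aux_G hE1.le rfl hEE
  rw [Real.log_exp] at haux
  have hc : (1 + aX / bX)⁻¹ = bX / (aX + bX) := by
    rw [show (1:ℝ) + aX / bX = (aX + bX) / bX by field_simp; ring, inv_div]
  rw [hc] at haux
  -- the L(x) < c inequality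
  have hlr := aux_log_lt hr
  have heq : x * (1 - x) * (((1 / x - 1) - (1 / x - 1)⁻¹) / 2) = 1 / 2 - x := by
    field_simp
    ring
  have h5 : x * (1 - x) * V ≤ 1 / 2 - x := by
    rw [← heq]
    exact mul_le_mul_of_nonneg_left (by linarith) (by positivity)
  have hq : 0 < E / (1 + E) ^ 2 := by positivity
  have hA : x * (1 - x) * V * ((aY + bY) / Ty * (E / (1 + E) ^ 2))
      < ((bY - (aY + bY) * x) / Ty - Real.log (aX / bX)) * (E / (1 + E) ^ 2) := by
    calc x * (1 - x) * V * ((aY + bY) / Ty * (E / (1 + E) ^ 2))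
        ≤ (1 / 2 - x) * ((aY + bY) / Ty * (E / (1 + E) ^ 2)) :=
          mul_le_mul_of_nonneg_right h5 (by positivity)
      _ = (aY + bY) / Ty * (1 / 2 - x) * (E / (1 + E) ^ 2) := by ring
      _ < ((bY - (aY + bY) * x) / Ty - Real.log (aX / bX)) * (E / (1 + E) ^ 2) :=
          mul_lt_mul_of_pos_right h2 hq
  have hkey0 : (1 + E)⁻¹ + x * (1 - x) * V * ((aY + bY) / Ty * (E / (1 + E) ^ 2))
      < bX / (aX + bX) := by nlinarith [haux]
  have hkey : (aX + bX) *
      ((1 + E)⁻¹ + x * (1 - x) * V * ((aY + bY) / Ty * (E / (1 + E) ^ 2))) < bX := by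
    have := mul_lt_mul_of_pos_left hkey0 hS
    rwa [mul_div_cancel₀ _ hS.ne'] at this
  -- rewrite numerator and conclude
  have hEq : -((aX + bX) * ((aY + bY) / Ty * (E / (1 + E) ^ 2))) * V -
      (bX - (aX + bX) * (1 + E)⁻¹) * (-(x ^ 2)⁻¹ / (1 / x - 1)) =
      (x * (1 - x))⁻¹ * (bX - (aX + bX) *
        ((1 + E)⁻¹ + x * (1 - x) * V * ((aY + bY) / Ty * (E / (1 + E) ^ 2)))) := by
    rw [show (1:ℝ) / x - 1 = (1 - x) / x by field_simp]
    field_simp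
    ring
  rw [hEq]
  exact mul_pos (inv_pos.2 (by positivity)) (by linarith)
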